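/- Let A be a unique factorization domain and let Q ∈ A be a prime (equivalently, irreducible) element. For nonzero polynomials P, P' ∈ A[x], we have den(P·P', x, Q) = den(P, x, Q) + den(P', x, Q). -/

import Mathlib

/-- `v_Q(a)`: the largest `s` such that `Q ^ s` divides `a` (for `a ≠ 0` and `Q` prime in a
UFD this supremum is attained). -/
noncomputable def vQ {A : Type*} [CommRing A] (Q a : A) : ℕ :=
  sSup {s : ℕ | Q ^ s ∣ a}

/-- `den(P, x, Q) = min_{i, p_i ≠ 0} (i + v_Q(p_i))` for `P = Σ_i p_i xⁱ`. -/
noncomputable def den {A : Type*} [CommRing A] (P : Polynomial A) (Q : A) : ℕ :=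
  sInf {m : ℕ | ∃ i : ℕ, P.coeff i ≠ 0 ∧ m = i + vQ Q (P.coeff i)}

section aux

variable {A : Type*} [CommRing A] [IsDomain A] [UniqueFactorizationMonoid A]

lemma vQ_spec {Q a : A} (hQ : Prime Q) (ha : a ≠ 0) :
    Q ^ vQ Q a ∣ a ∧ ¬ Q ^ (vQ Q a + 1) ∣ a := by
  obtain ⟨n, hn⟩ : FiniteMultiplicity Q a := FiniteMultiplicity.of_prime_left hQ ha
  have hbdd : BddAbove {s : ℕ | Q ^ s ∣ a} := by
    refine ⟨n, fun s hs => ?_⟩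
    by_contra hlt
    exact hn (dvd_trans (pow_dvd_pow Q (by omega)) hs)
  have hne : {s : ℕ | Q ^ s ∣ a}.Nonempty := ⟨0, by simp⟩
  constructor
  · exact Nat.sSup_mem hne hbdd
  · intro hdvd
    have := le_csSup hbdd hdvd
    unfold vQ at this
    omega

/-- Characterization predicate for `den`. -/
def DenIs (Q : A) (P : Polynomial A) (d : ℕ) : Prop :=
  (∀ i, Q ^ d ∣ Q ^ i * P.coeff i) ∧ ∃ i, ¬ Q ^ (d + 1) ∣ Q ^ i * P.coeff i

lemma denIs_den {Q : A} (hQ : Prime Q) {P : Polynomial A} (hP : P ≠ 0) :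
    DenIs Q P (den P Q) := by
  have hne : {m : ℕ | ∃ i : ℕ, P.coeff i ≠ 0 ∧ m = i + vQ Q (P.coeff i)}.Nonempty := by
    obtain ⟨i, hi⟩ : ∃ i, P.coeff i ≠ 0 := by
      by_contra h
      push_neg at h
      exact hP (Polynomial.ext fun i => by simp [h i])
    exact ⟨i + vQ Q (P.coeff i), i, hi, rfl⟩
  obtain ⟨i0, hi0, hd⟩ := Nat.sInf_mem hne
  constructor
  · intro i
    by_cases hi : P.coeff i = 0
    · simp [hi]
    · have hle : den P Q ≤ i + vQ Q (P.coeff i) := Nat.sInf_le ⟨i, hi, rfl⟩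
      refine (pow_dvd_pow Q hle).trans ?_
      rw [pow_add]
      exact mul_dvd_mul_left _ (vQ_spec hQ hi).1
  · refine ⟨i0, fun hdvd => ?_⟩
    unfold den at hdvd
    rw [hd, add_assoc, pow_add] at hdvd
    have hQ0 : (Q : A) ^ i0 ≠ 0 := pow_ne_zero _ hQ.ne_zero
    rw [mul_dvd_mul_iff_left hQ0] at hdvd
    exact (vQ_spec hQ hi0).2 hdvd

lemma denIs_unique {Q : A} {P : Polynomial A} {d d' : ℕ}
    (h : DenIs Q P d) (h' : DenIs Q P d') : d = d' := by
  by_contra hne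
  rcases Nat.lt_or_ge d d' with hlt | hge
  · obtain ⟨i, hi⟩ := h.2
    exact hi ((pow_dvd_pow Q (by omega)).trans (h'.1 i))
  · obtain ⟨i, hi⟩ := h'.2
    exact hi ((pow_dvd_pow Q (by omega)).trans (h.1 i))

lemma denIs_mul {Q : A} (hQ : Prime Q) {P P' : Polynomial A} {d d' : ℕ}
    (h : DenIs Q P d) (h' : DenIs Q P' d') : DenIs Q (P * P') (d + d') := by
  have key : ∀ n, Q ^ n * (P * P').coeff n
      = ∑ ij ∈ Finset.HasAntidiagonal.antidiagonal n, (Q ^ ij.1 * P.coeff ij.1) * (Q ^ ij.2 * P'.coeff ij.2) := by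
    intro n
    rw [Polynomial.coeff_mul, Finset.mul_sum]
    refine Finset.sum_congr rfl fun ij hij => ?_
    rw [Finset.HasAntidiagonal.mem_antidiagonal] at hij
    rw [← hij, pow_add]; ring
  constructor
  · intro n
    rw [key]
    refine Finset.dvd_sum fun ij _ => ?_
    rw [pow_add]
    exact mul_dvd_mul (h.1 ij.1) (h'.1 ij.2)
  · -- Gauss-type argument: take minimal bad indices
    have hex : ∃ i, ¬ Q ^ (d + 1) ∣ Q ^ i * P.coeff i := h.2
    have hex' : ∃ j, ¬ Q ^ (d' + 1) ∣ Q ^ j * P'.coeff j := h'.2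
    classical
    set i0 := Nat.find hex with hi0def
    set j0 := Nat.find hex' with hj0def
    have hi0 : ¬ Q ^ (d + 1) ∣ Q ^ i0 * P.coeff i0 := Nat.find_spec hex
    have hj0 : ¬ Q ^ (d' + 1) ∣ Q ^ j0 * P'.coeff j0 := Nat.find_spec hex'
    have hi0min : ∀ i < i0, Q ^ (d + 1) ∣ Q ^ i * P.coeff i := fun i hi => by
      by_contra hc; exact Nat.lt_irrefl _ (lt_of_le_of_lt (Nat.find_le hc) hi)
    have hj0min : ∀ j < j0, Q ^ (d' + 1) ∣ Q ^ j * P'.coeff j := fun j hj => by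
      by_contra hc; exact Nat.lt_irrefl _ (lt_of_le_of_lt (Nat.find_le hc) hj)
    refine ⟨i0 + j0, fun hdvd => ?_⟩
    rw [key] at hdvd
    have hmem : ((i0, j0) : ℕ × ℕ) ∈ Finset.HasAntidiagonal.antidiagonal (i0 + j0) := by
      simp [Finset.mem_antidiagonal]
    rw [← Finset.add_sum_erase _ _ hmem] at hdvd
    have hrest : Q ^ (d + d' + 1) ∣
        ∑ ij ∈ (Finset.HasAntidiagonal.antidiagonal (i0 + j0)).erase (i0, j0),
          (Q ^ ij.1 * P.coeff ij.1) * (Q ^ ij.2 * P'.coeff ij.2) := by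
      refine Finset.dvd_sum fun ij hij => ?_
      rw [Finset.mem_erase, Finset.HasAntidiagonal.mem_antidiagonal] at hij
      have hcase : ij.1 < i0 ∨ ij.2 < j0 := by
        by_contra hc
        push_neg at hc
        have h1 : ij.1 = i0 := by omega
        have h2 : ij.2 = j0 := by omega
        exact hij.1 (Prod.ext h1 h2)
      rcases hcase with hlt | hlt
      · have := mul_dvd_mul (hi0min _ hlt) (h'.1 ij.2)
        rwa [← pow_add, show d + 1 + d' = d + d' + 1 by ring] at this
      · have := mul_dvd_mul (h.1 ij.1) (hj0min _ hlt)
        rwa [← pow_add, show d + (d' + 1) = d + d' + 1 by ring] at this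
    have hbad : Q ^ (d + d' + 1) ∣ (Q ^ i0 * P.coeff i0) * (Q ^ j0 * P'.coeff j0) := by
      simpa using dvd_sub hdvd hrest
    -- derive contradiction: exact valuations
    obtain ⟨u, hu⟩ := h.1 i0
    obtain ⟨u', hu'⟩ := h'.1 j0
    have hQu : ¬ Q ∣ u := fun ⟨w, hw⟩ => hi0 (by rw [hu, hw, pow_succ]; exact ⟨w, by ring⟩)
    have hQu' : ¬ Q ∣ u' := fun ⟨w, hw⟩ => hj0 (by rw [hu', hw, pow_succ]; exact ⟨w, by ring⟩)
    rw [hu, hu'] at hbad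
    have hQ0 : (Q : A) ^ (d + d') ≠ 0 := pow_ne_zero _ hQ.ne_zero
    have : Q ∣ u * u' := by
      obtain ⟨w, hw⟩ := hbad
      refine ⟨w, ?_⟩
      have heq : Q ^ (d + d') * (u * u') = Q ^ (d + d') * (Q * w) := by
        linear_combination hw
      exact mul_left_cancel₀ hQ0 heq
    rcases hQ.dvd_mul.mp this with hd1 | hd1
    · exact hQu hd1
    · exact hQu' hd1

end aux

/-- In a UFD `A` with a prime element `Q`, `den(·, x, Q)` is additive on products of
nonzero polynomials: `den(P·P', x, Q) = den(P, x, Q) + den(P', x, Q)`. -/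
theorem stmt18 {A : Type*} [CommRing A] [IsDomain A] [UniqueFactorizationMonoid A]
    (Q : A) (hQ : Prime Q) (P P' : Polynomial A) (hP : P ≠ 0) (hP' : P' ≠ 0) :
    den (P * P') Q = den P Q + den P' Q :=
  denIs_unique (denIs_den hQ (mul_ne_zero hP hP'))
    (denIs_mul hQ (denIs_den hQ hP) (denIs_den hQ hP'))
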